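/- In the quantized enveloping algebra U over Q(q), for i ≠ j one has ad(e_i^{(n)})(e_j) = Σ_{r=0}^{n} (−1)^r q_i^{r(n−1+a_{ij})} e_i^{(n−r)} e_j e_i^{(r)} when n < 1 − a_{ij}, and ad(e_i^{(n)})(e_j) = 0 when n ≥ 1 − a_{ij}. -/

import Mathlib

noncomputable section

/-- The quantum integer `[n]_t = t^{n-1} + t^{n-3} + ⋯ + t^{-(n-1)}`. -/
def qInt {F : Type*} [Field F] (t : F) (n : ℕ) : F :=
  ∑ j ∈ Finset.range n, t ^ ((n : ℤ) - 1 - 2 * j)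

/-- The quantum factorial `[n]_t!`. -/
def qFac {F : Type*} [Field F] (t : F) (n : ℕ) : F :=
  ∏ m ∈ Finset.range n, qInt t (m + 1)

lemma qFac_succ {F : Type*} [Field F] (t : F) (n : ℕ) :
    qFac t (n+1) = qFac t n * qInt t (n+1) := Finset.prod_range_succ _ _

lemma qInt_key {F : Type*} [Field F] {t : F} (ht : t ≠ 0) (r k : ℕ) :
    t ^ r * qInt t (r + k) = qInt t k + t ^ (r + k) * qInt t r := by
  simp only [qInt, Finset.sum_range_add, mul_add, Finset.mul_sum]
  rw [add_comm]
  congr 1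
  · apply Finset.sum_congr rfl
    intro j hj
    rw [← zpow_natCast t r, ← zpow_add₀ ht]
    congr 1
    push_cast; ring
  · apply Finset.sum_congr rfl
    intro j hj
    rw [← zpow_natCast t (r+k), ← zpow_add₀ ht, ← zpow_natCast t r, ← zpow_add₀ ht]
    congr 1
    push_cast; ring

def cCoef {F : Type*} [Field F] (qi : F) (a : ℤ) (n r : ℕ) : F :=
  (-1 : F) ^ r * qi ^ ((r : ℤ) * ((n : ℤ) - 1 + a)) * qFac qi n *
    (qFac qi (n - r))⁻¹ * (qFac qi r)⁻¹

lemma qInt_ne {F : Type*} [Field F] {qi : F} (hfac : ∀ r : ℕ, qFac qi r ≠ 0) (k : ℕ) :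
    qInt qi (k + 1) ≠ 0 := fun h => hfac (k+1) (by rw [qFac_succ, h, mul_zero])

lemma cCoef_zero {F : Type*} [Field F] {qi : F} (hfac : ∀ r : ℕ, qFac qi r ≠ 0)
    (a : ℤ) (n : ℕ) : cCoef qi a n 0 = 1 := by
  have := mul_inv_cancel₀ (hfac n)
  simp only [cCoef, pow_zero, Nat.cast_zero, zero_mul, zpow_zero, Nat.sub_zero, one_mul]
  rw [this]
  simp [qFac]

lemma cCoef_top {F : Type*} [Field F] {qi : F} (hqi : qi ≠ 0)
    (hfac : ∀ r : ℕ, qFac qi r ≠ 0) (a : ℤ) (n : ℕ) :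
    cCoef qi a (n+1) (n+1) = -(qi ^ (2*(n:ℤ)+a) * cCoef qi a n n) := by
  have h0 : qFac qi 0 = 1 := by simp [qFac]
  simp only [cCoef, Nat.sub_self, h0, inv_one, mul_one]
  rw [mul_assoc _ (qFac qi (n+1)), mul_inv_cancel₀ (hfac (n+1)), mul_one,
    mul_assoc _ (qFac qi n), mul_inv_cancel₀ (hfac n), mul_one]
  rw [pow_succ]
  have : qi ^ ((((n:ℕ)+1:ℕ):ℤ) * ((((n:ℕ)+1:ℕ):ℤ) - 1 + a)) =
      qi ^ (2*(n:ℤ)+a) * qi ^ ((n:ℤ) * ((n:ℤ) - 1 + a)) := by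
    rw [← zpow_add₀ hqi]; congr 1; push_cast; ring
  rw [this]
  ring

lemma cCoef_rec {F : Type*} [Field F] {qi : F} (hqi : qi ≠ 0)
    (hfac : ∀ r : ℕ, qFac qi r ≠ 0) (a : ℤ) (m s : ℕ) :
    cCoef qi a (m+s+2) (s+1) =
      cCoef qi a (m+s+1) (s+1) - qi ^ (2*((m:ℤ)+(s:ℤ)+1)+a) * cCoef qi a (m+s+1) s := by
  have key : qi ^ (s+1) * qInt qi (m+s+2) = qInt qi (m+1) + qi ^ (m+s+2) * qInt qi (s+1) := by
    have h := qInt_key hqi (s+1) (m+1)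
    rw [show s+1+(m+1) = m+s+2 from by omega] at h
    exact h
  have e1 : m+s+2-(s+1) = m+1 := by omega
  have e2 : m+s+1-(s+1) = m := by omega
  have e3 : m+s+1-s = m+1 := by omega
  simp only [cCoef, e1, e2, e3]
  rw [show m+s+2 = (m+s+1)+1 from rfl, qFac_succ qi (m+s+1), qFac_succ qi m, qFac_succ qi s,
    show m+s+1+1 = m+s+2 from by omega]
  have hp1 : qi ^ (((s+1 : ℕ) : ℤ) * (((m+s+2 : ℕ) : ℤ) - 1 + a)) =
      (qi ^ ((m:ℤ)+(s:ℤ)+a)) ^ (s+1) * qi ^ (s+1) := by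
    rw [← zpow_natCast (qi ^ ((m:ℤ)+(s:ℤ)+a)) (s+1), ← zpow_mul, ← zpow_natCast qi (s+1),
      ← zpow_add₀ hqi]
    congr 1; push_cast; ring
  have hp2 : qi ^ (((s+1 : ℕ) : ℤ) * (((m+s+1 : ℕ) : ℤ) - 1 + a)) =
      (qi ^ ((m:ℤ)+(s:ℤ)+a)) ^ (s+1) := by
    rw [← zpow_natCast (qi ^ ((m:ℤ)+(s:ℤ)+a)) (s+1), ← zpow_mul]
    congr 1; push_cast; ring
  have hp3 : qi ^ (((s : ℕ) : ℤ) * (((m+s+1 : ℕ) : ℤ) - 1 + a)) =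
      (qi ^ ((m:ℤ)+(s:ℤ)+a)) ^ s := by
    rw [← zpow_natCast (qi ^ ((m:ℤ)+(s:ℤ)+a)) s, ← zpow_mul]
    congr 1; push_cast; ring
  have hq : qi ^ (2*((m:ℤ)+(s:ℤ)+1)+a) = qi ^ ((m:ℤ)+(s:ℤ)+a) * qi ^ (m+s+2) := by
    rw [← zpow_natCast qi (m+s+2), ← zpow_add₀ hqi]
    congr 1; push_cast; ring
  rw [hp1, hp2, hp3, hq]
  have nfm := hfac m
  have nfs := hfac s
  have nfA := hfac (m+s+1)
  have nI1 := qInt_ne hfac m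
  have nI2 := qInt_ne hfac s
  field_simp
  linear_combination ((-1:F)^(s+1) * (qi ^ ((m:ℤ)+(s:ℤ)+a))^(s+1)) * key


lemma main_formula {F U : Type*} [Field F] [Ring U] [Algebra F U]
    (qi : F) (hqi : qi ≠ 0)
    (e ej ki kiInv : U) (a : ℤ)
    (hki : ki * kiInv = 1) (hik : kiInv * ki = 1)
    (hkie : ki * e = qi ^ (2 : ℤ) • (e * ki))
    (hkiej : ki * ej = qi ^ a • (ej * ki))
    (adE : U → U)
    (hadE : ∀ v : U, adE v = e * v - ki * v * (kiInv * e))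
    (hfac : ∀ r : ℕ, qFac qi r ≠ 0) (n : ℕ) :
    adE^[n] ej = ∑ r ∈ Finset.range (n+1),
      cCoef qi a n r • (e ^ (n-r) * ej * e ^ r) := by
  have hphi_mul : ∀ x y : U, ki * (x * y) * kiInv = (ki * x * kiInv) * (ki * y * kiInv) := by
    intro x y
    simp only [mul_assoc]
    rw [← mul_assoc kiInv ki, hik, one_mul]
  have hphie : ki * e * kiInv = qi ^ (2:ℤ) • e := by
    rw [hkie, smul_mul_assoc, mul_assoc, hki, mul_one]
  have hphiej : ki * ej * kiInv = qi ^ a • ej := by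
    rw [hkiej, smul_mul_assoc, mul_assoc, hki, mul_one]
  have hphipow : ∀ s : ℕ, ki * e ^ s * kiInv = (qi ^ (2*(s:ℤ))) • e ^ s := by
    intro s
    induction s with
    | zero => simpa using hki
    | succ s ih =>
      rw [pow_succ, hphi_mul, ih, hphie, smul_mul_assoc, mul_smul_comm, smul_smul,
        ← zpow_add₀ hqi, ← pow_succ]
      try congr 1
      all_goals (push_cast; try ring)
  have hconj : ∀ s r : ℕ, ki * (e ^ s * ej * e ^ r) * kiInv
      = (qi ^ (2*(s:ℤ) + a + 2*(r:ℤ))) • (e ^ s * ej * e ^ r) := by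
    intro s r
    rw [hphi_mul (e ^ s * ej) (e ^ r), hphi_mul (e ^ s) ej, hphipow, hphipow, hphiej]
    simp only [smul_mul_assoc, mul_smul_comm, smul_smul, ← zpow_add₀ hqi]
    try congr 1
    all_goals try ring
  have hterm : ∀ s r : ℕ, adE (e ^ s * ej * e ^ r)
      = e ^ (s+1) * ej * e ^ r - (qi ^ (2*(s:ℤ) + a + 2*(r:ℤ))) • (e ^ s * ej * e ^ (r+1)) := by
    intro s r
    rw [hadE, show ki * (e ^ s * ej * e ^ r) * (kiInv * e)
        = (ki * (e ^ s * ej * e ^ r) * kiInv) * e from by simp [mul_assoc],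
      hconj, smul_mul_assoc]
    rw [show e * (e ^ s * ej * e ^ r) = e ^ (s+1) * ej * e ^ r from by
          rw [← mul_assoc, ← mul_assoc, ← pow_succ'],
        show e ^ s * ej * e ^ r * e = e ^ s * ej * e ^ (r+1) from by
          rw [mul_assoc, ← pow_succ]]
  have hlin : ∀ (t : Finset ℕ) (f : ℕ → F) (g : ℕ → U),
      adE (∑ r ∈ t, f r • g r) = ∑ r ∈ t, f r • adE (g r) := by
    intro t f g
    rw [hadE, Finset.mul_sum, Finset.mul_sum, Finset.sum_mul, ← Finset.sum_sub_distrib]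
    apply Finset.sum_congr rfl
    intro r _
    simp only [hadE, smul_sub, mul_smul_comm, smul_mul_assoc]
  induction n with
  | zero =>
    simp [cCoef_zero hfac]
  | succ n ih =>
    rw [Function.iterate_succ_apply', ih, hlin]
    have hstep : ∀ r ∈ Finset.range (n+1),
        cCoef qi a n r • adE (e ^ (n-r) * ej * e ^ r)
          = cCoef qi a n r • (e ^ (n+1-r) * ej * e ^ r)
            - (cCoef qi a n r * qi ^ (2*(n:ℤ)+a)) • (e ^ (n-r) * ej * e ^ (r+1)) := by
      intro r hr
      have hr' : r ≤ n := Nat.lt_succ_iff.mp (Finset.mem_range.mp hr)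
      rw [hterm (n-r) r, smul_sub, smul_smul,
        show (2*(((n-r:ℕ)):ℤ) + a + 2*(r:ℤ)) = 2*(n:ℤ)+a from by
          rw [Nat.cast_sub hr']; ring,
        show n-r+1 = n+1-r from by omega]
    rw [Finset.sum_congr rfl hstep, Finset.sum_sub_distrib,
      Finset.sum_range_succ' (fun r => cCoef qi a n r • (e ^ (n+1-r) * ej * e ^ r)) n,
      Finset.sum_range_succ (fun r => (cCoef qi a n r * qi ^ (2*(n:ℤ)+a)) • (e ^ (n-r) * ej * e ^ (r+1))) n,
      Finset.sum_range_succ' (fun r => cCoef qi a (n+1) r • (e ^ (n+1-r) * ej * e ^ r)) (n+1),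
      Finset.sum_range_succ (fun r => cCoef qi a (n+1) (r+1) • (e ^ (n+1-(r+1)) * ej * e ^ (r+1))) n]
    simp only [Nat.succ_sub_succ, Nat.sub_zero, Nat.sub_self, pow_zero, mul_one, one_mul]
    have hmid : (∑ r ∈ Finset.range n, cCoef qi a n (r+1) • (e ^ (n-r) * ej * e ^ (r+1)))
        - (∑ r ∈ Finset.range n, (cCoef qi a n r * qi ^ (2*(n:ℤ)+a)) • (e ^ (n-r) * ej * e ^ (r+1)))
        = ∑ r ∈ Finset.range n, cCoef qi a (n+1) (r+1) • (e ^ (n-r) * ej * e ^ (r+1)) := by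
      rw [← Finset.sum_sub_distrib]
      apply Finset.sum_congr rfl
      intro r hr
      have hr' := Finset.mem_range.mp hr
      rw [← sub_smul]
      congr 1
      obtain ⟨m, hm⟩ : ∃ m, n = m + r + 1 := ⟨n - r - 1, by omega⟩
      subst hm
      have hrec := cCoef_rec hqi hfac a m r
      rw [show m+r+1+1 = m+r+2 from by omega,
        show (2*(((m+r+1:ℕ)):ℤ)+a) = 2*((m:ℤ)+(r:ℤ)+1)+a from by push_cast; ring,
        mul_comm (cCoef qi a (m+r+1) r)]
      exact hrec.symm
    have hY : cCoef qi a (n+1) (n+1) • (ej * e ^ (n+1))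
        = -((cCoef qi a n n * qi ^ (2*(n:ℤ)+a)) • (ej * e ^ (n+1))) := by
      rw [cCoef_top hqi hfac, mul_comm, neg_smul]
    rw [hY, cCoef_zero hfac, cCoef_zero hfac, ← hmid]
    abel


/-- In the quantized enveloping algebra over `ℚ(q)`, for `i ≠ j` (with `e = e_i`,
`ej = e_j`, `a = a_{ij} ≤ 0`, and the quantum Serre relation as hypothesis `hserre`):
`ad(e_i^{(n)})(e_j) = Σ_{r=0}^{n} (−1)^r q_i^{r(n−1+a_{ij})} e_i^{(n−r)} e_j e_i^{(r)}`
when `n < 1 − a_{ij}`, and `ad(e_i^{(n)})(e_j) = 0` when `n ≥ 1 − a_{ij}`.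
Here `ad(e_i^{(n)}) = (1/[n]_{q_i}!)·ad(e_i)^n` with
`ad(e_i)(v) = e_i v − k_i v k_i^{-1} e_i`, and `e_i^{(r)} = e_i^r/[r]_{q_i}!`. -/
theorem stmt2 {F U : Type*} [Field F] [Ring U] [Algebra F U]
    (qi : F) (hqi : qi ≠ 0)
    (e ej ki kiInv : U) (a : ℤ) (ha : a ≤ 0)
    (hki : ki * kiInv = 1) (hik : kiInv * ki = 1)
    (hkie : ki * e = qi ^ (2 : ℤ) • (e * ki))
    (hkiInve : kiInv * e = qi ^ (-2 : ℤ) • (e * kiInv))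
    (hkiej : ki * ej = qi ^ a • (ej * ki))
    (hkiInvej : kiInv * ej = qi ^ (-a) • (ej * kiInv))
    (hserre : ∑ r ∈ Finset.range ((1 - a).toNat + 1),
      ((-1 : F) ^ r * (qFac qi ((1 - a).toNat - r))⁻¹ * (qFac qi r)⁻¹) •
        (e ^ ((1 - a).toNat - r) * ej * e ^ r) = 0)
    (adE : U → U)
    (hadE : ∀ v : U, adE v = e * v - ki * v * (kiInv * e))
    (hfac : ∀ r : ℕ, qFac qi r ≠ 0) (n : ℕ) :
    ((n : ℤ) < 1 - a →
      (qFac qi n)⁻¹ • adE^[n] ej =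
        ∑ r ∈ Finset.range (n + 1),
          ((-1 : F) ^ r * qi ^ ((r : ℤ) * ((n : ℤ) - 1 + a)) *
            (qFac qi (n - r))⁻¹ * (qFac qi r)⁻¹) • (e ^ (n - r) * ej * e ^ r)) ∧
    (1 - a ≤ (n : ℤ) → (qFac qi n)⁻¹ • adE^[n] ej = 0) := by
  constructor
  · intro _
    rw [main_formula qi hqi e ej ki kiInv a hki hik hkie hkiej adE hadE hfac n,
      Finset.smul_sum]
    apply Finset.sum_congr rfl
    intro r hr
    rw [smul_smul]
    congr 1
    simp only [cCoef]
    ring_nf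
    rw [mul_inv_cancel₀ (hfac n), one_mul]
  · intro hn
    set N := (1 - a).toNat with hNdef
    have hNa : ((N : ℤ)) = 1 - a := Int.toNat_of_nonneg (by omega)
    have hzero : adE^[N] ej = 0 := by
      rw [main_formula qi hqi e ej ki kiInv a hki hik hkie hkiej adE hadE hfac N]
      have hc : ∀ r ∈ Finset.range (N+1),
          cCoef qi a N r • (e ^ (N-r) * ej * e ^ r)
          = qFac qi N • ((((-1 : F) ^ r * (qFac qi (N - r))⁻¹ * (qFac qi r)⁻¹)) •
              (e ^ (N-r) * ej * e ^ r)) := by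
        intro r hr
        rw [smul_smul]
        congr 1
        simp only [cCoef]
        rw [show ((r:ℤ) * ((N:ℤ) - 1 + a)) = 0 from by rw [hNa]; ring, zpow_zero]
        ring
      rw [Finset.sum_congr rfl hc, ← Finset.smul_sum, hserre, smul_zero]
    have hz : adE^[n] ej = 0 := by
      obtain ⟨m, rfl⟩ : ∃ m, n = m + N := ⟨n - N, by omega⟩
      rw [Function.iterate_add_apply, hzero]
      exact Function.iterate_fixed (by rw [hadE]; simp) m
    rw [hz, smul_zero]

end
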